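/- Let S be a numerical semigroup with |Ap_2| = 3. If |C_3| ≥ 2, then every element x ∈ C_3 satisfies |Supp(x)| ≤ 2. -/
import Mathlib


open Set

/-- A numerical semigroup: a cofinite submonoid of ℕ. -/
def IsNumSgp (S : Set ℕ) : Prop :=
  0 ∈ S ∧ (∀ a ∈ S, ∀ b ∈ S, a + b ∈ S) ∧ Sᶜ.Finite

/-- The maximal ideal `M = S \ {0}`. -/
def MS (S : Set ℕ) : Set ℕ := S \ {0}

/-- The multiplicity `e` of `S`, the smallest nonzero element. -/
noncomputable def mult (S : Set ℕ) : ℕ := sInf (MS S)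

/-- `nM S h` is the set of sums of `h` elements of `M = S \ {0}` (with `nM S 0 = {0}`). -/
def nM (S : Set ℕ) : ℕ → Set ℕ
  | 0 => {0}
  | k + 1 => {x | ∃ a ∈ MS S, ∃ b ∈ nM S k, x = a + b}

/-- The order of `s`: the largest `h` with `s ∈ hM`. -/
noncomputable def ordS (S : Set ℕ) (s : ℕ) : ℕ := sSup {h | s ∈ nM S h}

/-- The Apéry set of `S` with respect to the multiplicity `e`:
elements `s ∈ S` with `s - e ∉ S`. -/
def Ap (S : Set ℕ) : Set ℕ := {s ∈ S | ∀ t ∈ S, t + mult S ≠ s}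

/-- Elements of the Apéry set of order `k`. -/
def ApK (S : Set ℕ) (k : ℕ) : Set ℕ := {s ∈ Ap S | ordS S s = k}

/-- `C_k = {s ∈ S : ord s = k and s - e ∉ (k-1)M}`. -/
def CK (S : Set ℕ) (k : ℕ) : Set ℕ :=
  {s ∈ S | ordS S s = k ∧ ∀ t ∈ nM S (k - 1), t + mult S ≠ s}

/-- `D_k = {s ∈ S : ord s = k-1 and ord (s+e) > k}`. -/
def DK (S : Set ℕ) (k : ℕ) : Set ℕ :=
  {s ∈ S | ordS S s = k - 1 ∧ k < ordS S (s + mult S)}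

/-- The Hilbert function of `R = k[[S]]`: `H(0) = 1`, `H(n) = |nM \ (n+1)M|`. -/
noncomputable def HF (S : Set ℕ) (n : ℕ) : ℕ := (nM S n \ nM S (n + 1)).ncard

/-- The set of minimal generators of `S`. -/
def MinGens (S : Set ℕ) : Set ℕ :=
  MS S \ {x | ∃ a ∈ MS S, ∃ b ∈ MS S, x = a + b}

/-- `a` is a maximal representation of `s`: a finitely supported coefficient
function on the minimal generators with `Σ aⱼ nⱼ = s` and `Σ aⱼ = ord s`. -/
def IsMaxRep (S : Set ℕ) (s : ℕ) (a : ℕ →₀ ℕ) : Prop :=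
  (↑a.support : Set ℕ) ⊆ MinGens S ∧
  (a.sum fun n c => c * n) = s ∧
  (a.sum fun _ c => c) = ordS S s

/-- `|Supp(s)|`: the maximal number of distinct minimal generators appearing
in a maximal representation of `s`. -/
noncomputable def SuppCard (S : Set ℕ) (s : ℕ) : ℕ :=
  sSup {q | ∃ a : ℕ →₀ ℕ, IsMaxRep S s a ∧ a.support.card = q}

/-- The Frobenius number of `S`. -/
noncomputable def Frob (S : Set ℕ) : ℕ := sSup Sᶜ

section AuxNSG

variable {S : Set ℕ}

lemma MS_nonempty (hS : IsNumSgp S) : (MS S).Nonempty := by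
  have h1 : S.Infinite := by simpa using hS.2.2.infinite_compl
  exact (h1.diff (Set.finite_singleton 0)).nonempty

lemma mem_MS_iff {m : ℕ} : m ∈ MS S ↔ m ∈ S ∧ m ≠ 0 := by simp [MS]

lemma mult_mem (hS : IsNumSgp S) : mult S ∈ MS S := Nat.sInf_mem (MS_nonempty hS)

lemma mult_le {m : ℕ} (hm : m ∈ MS S) : mult S ≤ m := Nat.sInf_le hm

lemma one_le_of_mem_MS {m : ℕ} (hm : m ∈ MS S) : 1 ≤ m :=
  Nat.one_le_iff_ne_zero.2 (mem_MS_iff.1 hm).2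

lemma mult_pos (hS : IsNumSgp S) : 1 ≤ mult S := one_le_of_mem_MS (mult_mem hS)

lemma nM_subset (hS : IsNumSgp S) : ∀ h, nM S h ⊆ S := by
  intro h
  induction h with
  | zero => intro x hx; have : x = 0 := hx; subst this; exact hS.1
  | succ k ih =>
    rintro x ⟨a, ha, b, hb, rfl⟩
    exact hS.2.1 a (mem_MS_iff.1 ha).1 b (ih hb)

lemma le_of_mem_nM : ∀ h x, x ∈ nM S h → h ≤ x := by
  intro h
  induction h with
  | zero => intro x _; omega
  | succ k ih =>
    rintro x ⟨a, ha, b, hb, rfl⟩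
    have := one_le_of_mem_MS ha
    have := ih b hb
    omega

lemma mem_nM_one {a : ℕ} (ha : a ∈ MS S) : a ∈ nM S 1 :=
  ⟨a, ha, 0, rfl, (add_zero a).symm⟩

lemma nM_add : ∀ (h k x y : ℕ), x ∈ nM S h → y ∈ nM S k → x + y ∈ nM S (h + k) := by
  intro h
  induction h with
  | zero =>
    intro k x y hx hy
    have : x = 0 := hx
    subst this
    simpa using hy
  | succ m ih =>
    rintro k x y ⟨a, ha, b, hb, rfl⟩ hy
    have h1 : b + y ∈ nM S (m + k) := ih k b y hb hy
    have : m + 1 + k = (m + k) + 1 := by omega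
    rw [this]
    exact ⟨a, ha, b + y, h1, by omega⟩

lemma bddAbove_ord (s : ℕ) : BddAbove {h | s ∈ nM S h} :=
  ⟨s, fun h hh => le_of_mem_nM h s hh⟩

lemma ord_ge {s h : ℕ} (hs : s ∈ nM S h) : h ≤ ordS S s :=
  le_csSup (bddAbove_ord s) hs

lemma mem_nM_ord {s : ℕ} (hs : s ∈ MS S) : s ∈ nM S (ordS S s) := by
  have h1 : (1:ℕ) ∈ {h | s ∈ nM S h} := mem_nM_one hs
  exact Nat.sSup_mem ⟨1, h1⟩ (bddAbove_ord s)

lemma MinGens_subset : MinGens S ⊆ MS S := fun _ hx => hx.1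

lemma decomp (hS : IsNumSgp S) : ∀ s, s ∈ MS S →
    ∃ l : Multiset ℕ, (∀ g ∈ l, g ∈ MinGens S) ∧ 1 ≤ Multiset.card l ∧ l.sum = s := by
  intro s
  induction s using Nat.strong_induction_on with
  | _ s ih =>
    intro hs
    by_cases hg : s ∈ MinGens S
    · exact ⟨{s}, by simpa using hg, by simp, by simp⟩
    · have hbad : ∃ a ∈ MS S, ∃ b ∈ MS S, s = a + b := by
        by_contra hc
        exact hg ⟨hs, hc⟩
      obtain ⟨a, ha, b, hb, rfl⟩ := hbad
      have h1 := one_le_of_mem_MS ha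
      have h2 := one_le_of_mem_MS hb
      obtain ⟨la, hla1, hla2, hla3⟩ := ih a (by omega) ha
      obtain ⟨lb, hlb1, hlb2, hlb3⟩ := ih b (by omega) hb
      refine ⟨la + lb, ?_, ?_, ?_⟩
      · intro g hgm
        rcases Multiset.mem_add.1 hgm with h | h
        · exact hla1 g h
        · exact hlb1 g h
      · simp; omega
      · simp [hla3, hlb3]

lemma sum_mem_nM : ∀ (l : Multiset ℕ), (∀ g ∈ l, g ∈ MS S) →
    l.sum ∈ nM S (Multiset.card l) := by
  intro l
  induction l using Multiset.induction with
  | empty => intro _; simp [nM]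
  | cons a l ih =>
    intro hl
    have h1 : l.sum ∈ nM S (Multiset.card l) := ih fun g hg => hl g (Multiset.mem_cons_of_mem hg)
    have h2 : a ∈ MS S := hl a (Multiset.mem_cons_self a l)
    simp only [Multiset.sum_cons, Multiset.card_cons]
    exact ⟨a, h2, l.sum, h1, rfl⟩

lemma ord_zero : ordS S 0 = 0 := by
  have : {h | (0:ℕ) ∈ nM S h} = {0} := by
    ext h
    constructor
    · intro hh
      have := le_of_mem_nM h 0 hh
      simpa using this
    · rintro rfl
      rfl
  rw [ordS, this]
  simp

lemma three_gens (hS : IsNumSgp S) {z : ℕ} (hz : z ∈ S) (ho : ordS S z = 3) :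
    ∃ g1 g2 g3, g1 ∈ MinGens S ∧ g2 ∈ MinGens S ∧ g3 ∈ MinGens S ∧ g1 + g2 + g3 = z := by
  have hz0 : z ≠ 0 := by
    rintro rfl
    rw [ord_zero] at ho
    omega
  have hzM : z ∈ MS S := mem_MS_iff.2 ⟨hz, hz0⟩
  have h3 : z ∈ nM S 3 := by
    have := mem_nM_ord hzM
    rwa [ho] at this
  obtain ⟨a, ha, b, hb, hzab⟩ := h3
  obtain ⟨c, hc, d, hd, hbcd⟩ := hb
  obtain ⟨u, hu, v, hv, hduv⟩ := hd
  have hv0 : v = 0 := hv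
  have hzsum : z = a + c + u := by omega
  obtain ⟨la, ha1, ha2, ha3⟩ := decomp hS a ha
  obtain ⟨lc, hc1, hc2, hc3⟩ := decomp hS c hc
  obtain ⟨lu, hu1, hu2, hu3⟩ := decomp hS u hu
  have hall : ∀ g ∈ la + lc + lu, g ∈ MinGens S := by
    intro g hg
    rcases Multiset.mem_add.1 hg with h | h
    · rcases Multiset.mem_add.1 h with h' | h'
      · exact ha1 g h'
      · exact hc1 g h'
    · exact hu1 g h
  have hsum : (la + lc + lu).sum = z := by
    simp [ha3, hc3, hu3]
    omega
  have hcard_ge : 3 ≤ Multiset.card (la + lc + lu) := by simp; omega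
  have hcard_le : Multiset.card (la + lc + lu) ≤ 3 := by
    have hmem : (la + lc + lu).sum ∈ nM S (Multiset.card (la + lc + lu)) :=
      sum_mem_nM _ fun g hg => MinGens_subset (hall g hg)
    rw [hsum] at hmem
    have := ord_ge hmem
    omega
  have hcard : Multiset.card (la + lc + lu) = 3 := le_antisymm hcard_le hcard_ge
  obtain ⟨g1, g2, g3, hlg⟩ := Multiset.card_eq_three.1 hcard
  rw [hlg] at hall hsum
  refine ⟨g1, g2, g3, hall g1 (by simp), hall g2 (by simp), hall g3 (by simp), ?_⟩
  have h123 : ({g1, g2, g3} : Multiset ℕ).sum = g1 + g2 + g3 := by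
    simp [Multiset.sum_cons]
    ring
  omega

lemma pairSum (hS : IsNumSgp S) {z : ℕ} (hz : z ∈ CK S 3) {g u v : ℕ}
    (hg : g ∈ MinGens S) (hu : u ∈ MinGens S) (hv : v ∈ MinGens S)
    (he : g + u + v = z) : u + v ∈ ApK S 2 := by
  obtain ⟨hzS, hord, hC⟩ := hz
  have hC2 : ∀ t ∈ nM S 2, t + mult S ≠ z := by
    intro t ht
    exact hC t (by norm_num; exact ht)
  have hgM := MinGens_subset hg
  have huM := MinGens_subset hu
  have hvM := MinGens_subset hv
  have huvS : u + v ∈ S := hS.2.1 u (mem_MS_iff.1 huM).1 v (mem_MS_iff.1 hvM).1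
  have huv2 : u + v ∈ nM S 2 := nM_add 1 1 u v (mem_nM_one huM) (mem_nM_one hvM)
  have hue := mult_le huM
  have hve := mult_le hvM
  have hep := mult_pos hS
  refine ⟨⟨huvS, ?_⟩, ?_⟩
  · intro t ht heq
    by_cases ht0 : t = 0
    · subst ht0; omega
    · have htM : t ∈ MS S := mem_MS_iff.2 ⟨ht, ht0⟩
      have h2 : t + g ∈ nM S 2 := nM_add 1 1 t g (mem_nM_one htM) (mem_nM_one hgM)
      exact hC2 (t + g) h2 (by omega)
  · have hle : ordS S (u + v) ≤ 2 := by
      have huvM : u + v ∈ MS S := mem_MS_iff.2 ⟨huvS, by omega⟩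
      have hzin : g + (u + v) ∈ nM S (1 + ordS S (u + v)) :=
        nM_add 1 _ g (u + v) (mem_nM_one hgM) (mem_nM_ord huvM)
      have : g + (u + v) = z := by omega
      rw [this] at hzin
      have := ord_ge hzin
      omega
    have hge : 2 ≤ ordS S (u + v) := ord_ge huv2
    omega

set_option maxHeartbeats 2000000 in
lemma coreDouble (p q r y a b : ℕ) (hpq : p ≠ q) (hpr : p ≠ r) (hqr : q ≠ r)
    (hne : y ≠ p + q + r)
    (K : ∀ a b c : ℕ, (a = p ∨ a = q ∨ a = r) → (b = p ∨ b = q ∨ b = r) →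
        (c = p ∨ c = q ∨ c = r) → a + b + c = y →
        a + b = p + q ∨ a + b = p + r ∨ a + b = q + r)
    (ha : a = p ∨ a = q ∨ a = r) (hb : b = p ∨ b = q ∨ b = r)
    (hy : a + a + b = y) : False := by
  have A := K a a b ha ha hb hy
  rcases ha with h1 | h1 | h1 <;> rcases hb with h2 | h2 | h2 <;>
    first
      | omega
      | (have B := K p p q (Or.inl rfl) (Or.inl rfl) (Or.inr (Or.inl rfl)) (by omega); omega)
      | (have B := K p p r (Or.inl rfl) (Or.inl rfl) (Or.inr (Or.inr rfl)) (by omega); omega)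
      | (have B := K q q p (Or.inr (Or.inl rfl)) (Or.inr (Or.inl rfl)) (Or.inl rfl) (by omega); omega)
      | (have B := K q q r (Or.inr (Or.inl rfl)) (Or.inr (Or.inl rfl)) (Or.inr (Or.inr rfl)) (by omega); omega)
      | (have B := K r r p (Or.inr (Or.inr rfl)) (Or.inr (Or.inr rfl)) (Or.inl rfl) (by omega); omega)
      | (have B := K r r q (Or.inr (Or.inr rfl)) (Or.inr (Or.inr rfl)) (Or.inr (Or.inl rfl)) (by omega); omega)

set_option maxHeartbeats 2000000 in
lemma core (p q r y m1 m2 m3 : ℕ) (hpq : p ≠ q) (hpr : p ≠ r) (hqr : q ≠ r)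
    (hne : y ≠ p + q + r)
    (K : ∀ a b c : ℕ, (a = p ∨ a = q ∨ a = r) → (b = p ∨ b = q ∨ b = r) →
        (c = p ∨ c = q ∨ c = r) → a + b + c = y →
        a + b = p + q ∨ a + b = p + r ∨ a + b = q + r)
    (h1 : m1 = p ∨ m1 = q ∨ m1 = r) (h2 : m2 = p ∨ m2 = q ∨ m2 = r)
    (h3 : m3 = p ∨ m3 = q ∨ m3 = r)
    (hy : m1 + m2 + m3 = y) : False := by
  rcases h1 with e1 | e1 | e1 <;> rcases h2 with e2 | e2 | e2 <;>
    rcases h3 with e3 | e3 | e3 <;>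
    first
      | omega
      | exact coreDouble p q r y p p hpq hpr hqr hne K (Or.inl rfl) (Or.inl rfl) (by omega)
      | exact coreDouble p q r y p q hpq hpr hqr hne K (Or.inl rfl) (Or.inr (Or.inl rfl)) (by omega)
      | exact coreDouble p q r y p r hpq hpr hqr hne K (Or.inl rfl) (Or.inr (Or.inr rfl)) (by omega)
      | exact coreDouble p q r y q p hpq hpr hqr hne K (Or.inr (Or.inl rfl)) (Or.inl rfl) (by omega)
      | exact coreDouble p q r y q q hpq hpr hqr hne K (Or.inr (Or.inl rfl)) (Or.inr (Or.inl rfl)) (by omega)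
      | exact coreDouble p q r y q r hpq hpr hqr hne K (Or.inr (Or.inl rfl)) (Or.inr (Or.inr rfl)) (by omega)
      | exact coreDouble p q r y r p hpq hpr hqr hne K (Or.inr (Or.inr rfl)) (Or.inl rfl) (by omega)
      | exact coreDouble p q r y r q hpq hpr hqr hne K (Or.inr (Or.inr rfl)) (Or.inr (Or.inl rfl)) (by omega)
      | exact coreDouble p q r y r r hpq hpr hqr hne K (Or.inr (Or.inr rfl)) (Or.inr (Or.inr rfl)) (by omega)

end AuxNSG

theorem stmt12 (S : Set ℕ) (hS : IsNumSgp S) (h2 : (ApK S 2).ncard = 3)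
    (h3 : 2 ≤ (CK S 3).ncard) :
    ∀ x ∈ CK S 3, SuppCard S x ≤ 2 := by
  intro x hx
  have hxS : x ∈ S := hx.1
  have hxord : ordS S x = 3 := hx.2.1
  unfold SuppCard
  refine csSup_le' ?_
  rintro n ⟨a, ⟨hsupp, hsum, hordsum⟩, rfl⟩
  by_contra hq
  push_neg at hq
  rw [hxord] at hordsum
  have hcoe : (a.sum fun _ c => c) = ∑ i ∈ a.support, a i := rfl
  have hcard_le : a.support.card ≤ ∑ i ∈ a.support, a i := by
    calc a.support.card = ∑ _i ∈ a.support, 1 := by simp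
    _ ≤ ∑ i ∈ a.support, a i := by
        refine Finset.sum_le_sum fun i hi => ?_
        have := Finsupp.mem_support_iff.1 hi
        omega
  rw [hcoe] at hordsum
  have hcard : a.support.card = 3 := by omega
  obtain ⟨p, q, r, hpq, hpr, hqr, hset⟩ := Finset.card_eq_three.1 hcard
  have hpmem : p ∈ a.support := by rw [hset]; simp
  have hqmem : q ∈ a.support := by rw [hset]; simp
  have hrmem : r ∈ a.support := by rw [hset]; simp
  have hap : a p ≠ 0 := Finsupp.mem_support_iff.1 hpmem
  have haq : a q ≠ 0 := Finsupp.mem_support_iff.1 hqmem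
  have har : a r ≠ 0 := Finsupp.mem_support_iff.1 hrmem
  have hsum3 : a p + a q + a r = 3 := by
    rw [hset] at hordsum
    rw [Finset.sum_insert (by simp [hpq, hpr]), Finset.sum_insert (by simp [hqr]),
      Finset.sum_singleton] at hordsum
    omega
  have hap1 : a p = 1 := by omega
  have haq1 : a q = 1 := by omega
  have har1 : a r = 1 := by omega
  have hx_eq : p + q + r = x := by
    have hw : (a.sum fun n c => c * n) = ∑ i ∈ a.support, a i * i := rfl
    rw [hw, hset, Finset.sum_insert (by simp [hpq, hpr]),
      Finset.sum_insert (by simp [hqr]), Finset.sum_singleton, hap1, haq1, har1] at hsum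
    omega
  have hpgen : p ∈ MinGens S := hsupp hpmem
  have hqgen : q ∈ MinGens S := hsupp hqmem
  have hrgen : r ∈ MinGens S := hsupp hrmem
  -- the three pairwise sums are in ApK S 2
  have h12 : p + q ∈ ApK S 2 := pairSum hS hx hrgen hpgen hqgen (by omega)
  have h13 : p + r ∈ ApK S 2 := pairSum hS hx hqgen hpgen hrgen (by omega)
  have h23 : q + r ∈ ApK S 2 := pairSum hS hx hpgen hqgen hrgen (by omega)
  have hsub : ({p + q, p + r, q + r} : Set ℕ) ⊆ ApK S 2 := by
    intro w hw
    rcases hw with rfl | rfl | rfl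
    · exact h12
    · exact h13
    · exact h23
  have hncard3 : ({p + q, p + r, q + r} : Set ℕ).ncard = 3 :=
    Set.ncard_eq_three.2 ⟨p + q, p + r, q + r, by omega, by omega, by omega, rfl⟩
  have hfin : (ApK S 2).Finite := by
    by_contra hinf
    rw [Set.Infinite.ncard hinf] at h2
    omega
  have heq : ({p + q, p + r, q + r} : Set ℕ) = ApK S 2 :=
    Set.eq_of_subset_of_ncard_le hsub (by omega) hfin
  have char : ∀ w ∈ ApK S 2, w = p + q ∨ w = p + r ∨ w = q + r := by
    intro w hw
    rw [← heq] at hw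
    simpa using hw
  -- get a second element of C_3
  obtain ⟨y, hy, hyx⟩ := Set.exists_ne_of_one_lt_ncard (s := CK S 3) (by omega) x
  obtain ⟨m1, m2, m3, hm1, hm2, hm3, hmy⟩ := three_gens hS hy.1 hy.2.1
  have K0 : ∀ u v w : ℕ, u ∈ MinGens S → v ∈ MinGens S → w ∈ MinGens S →
      u + v + w = y → v + w = p + q ∨ v + w = p + r ∨ v + w = q + r :=
    fun u v w hu hv hw he => char _ (pairSum hS hy hu hv hw he)
  have memlem : ∀ u v w : ℕ, u ∈ MinGens S → v ∈ MinGens S → w ∈ MinGens S →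
      u + v + w = y → u = p ∨ u = q ∨ u = r := by
    intro u v w hu hv hw he
    rcases K0 u v w hu hv hw he with h | h | h
    · have t1 := K0 q u p hqgen hu hpgen (by omega)
      have t2 := K0 p u q hpgen hu hqgen (by omega)
      omega
    · have t1 := K0 r u p hrgen hu hpgen (by omega)
      have t2 := K0 p u r hpgen hu hrgen (by omega)
      omega
    · have t1 := K0 r u q hrgen hu hqgen (by omega)
      have t2 := K0 q u r hqgen hu hrgen (by omega)
      omega
  have hm1m := memlem m1 m2 m3 hm1 hm2 hm3 hmy
  have hm2m := memlem m2 m1 m3 hm2 hm1 hm3 (by omega)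
  have hm3m := memlem m3 m1 m2 hm3 hm1 hm2 (by omega)
  have K : ∀ a b c : ℕ, (a = p ∨ a = q ∨ a = r) → (b = p ∨ b = q ∨ b = r) →
      (c = p ∨ c = q ∨ c = r) → a + b + c = y →
      a + b = p + q ∨ a + b = p + r ∨ a + b = q + r := by
    intro a b c ha hb hc he
    have hag : a ∈ MinGens S := by rcases ha with rfl | rfl | rfl <;> assumption
    have hbg : b ∈ MinGens S := by rcases hb with rfl | rfl | rfl <;> assumption
    have hcg : c ∈ MinGens S := by rcases hc with rfl | rfl | rfl <;> assumption
    exact K0 c a b hcg hag hbg (by omega)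
  exact core p q r y m1 m2 m3 hpq hpr hqr (by omega) K hm1m hm2m hm3m hmy
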